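/- With m ambiguous events among n total events (ambiguous events doubling the derivation count, others leaving it unchanged, starting from 1), the total number of parsing calls ∑_{i=1}^{n} f(i-1) is at most (n − m)·2^m + (2^m − 1), and this bound is achieved when all m ambiguous events occur first. -/

import Mathlib

lemma sum_two_pow_aux (m : ℕ) : ∑ i ∈ Finset.range m, 2 ^ i = 2 ^ m - 1 := by
  induction m with
  | zero => simp
  | succ k ih =>
    rw [Finset.sum_range_succ, ih, pow_succ]
    have : 1 ≤ 2 ^ k := Nat.one_le_two_pow
    omega

/-- With `m` ambiguous events among `n` (ambiguous events double the derivation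
count, others preserve it, starting from 1), the total work
`∑_{i=1}^{n} f (i-1)` is at most `(n − m)·2^m + (2^m − 1)`, and this bound is
attained when the `m` ambiguous events come first. -/
theorem work_bound_amb (f : ℕ → ℕ) (amb : ℕ → Prop)
    [DecidablePred amb] (n m : ℕ) (hmn : m ≤ n)
    (h0 : f 0 = 1)
    (hamb : ∀ i < n, amb i → f (i + 1) = 2 * f i)
    (hnamb : ∀ i < n, ¬ amb i → f (i + 1) = f i)
    (hm : ((Finset.range n).filter amb).card = m) :
    (∑ i ∈ Finset.Icc 1 n, f (i - 1)) ≤ (n - m) * 2 ^ m + (2 ^ m - 1) ∧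
    ((∀ i < n, (amb i ↔ i < m)) →
      (∑ i ∈ Finset.Icc 1 n, f (i - 1)) = (n - m) * 2 ^ m + (2 ^ m - 1)) := by
  set g : ℕ → ℕ := fun i => ((Finset.range i).filter amb).card with hg
  have hgs : ∀ i, g (i + 1) = g i + (if amb i then 1 else 0) := by
    intro i
    simp only [hg, Finset.range_add_one, Finset.filter_insert]
    split
    · rw [Finset.card_insert_of_notMem (by simp)]
    · simp
  have hf : ∀ i ≤ n, f i = 2 ^ g i := by
    intro i hi
    induction i with
    | zero => simpa [hg] using h0
    | succ k ih =>
      have hk : k < n := hi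
      have ih' := ih (le_of_lt hk)
      by_cases h : amb k
      · rw [hamb k hk h, ih', hgs, if_pos h, pow_succ]; ring
      · rw [hnamb k hk h, ih', hgs, if_neg h]; simp
  have hgle : ∀ i, g i ≤ i := by
    intro i
    simpa [hg] using Finset.card_filter_le (Finset.range i) amb
  have hgmono : ∀ ⦃i j⦄, i ≤ j → g i ≤ g j := by
    intro i j hij
    exact Finset.card_le_card
      (Finset.filter_subset_filter _ (Finset.range_subset_range.2 hij))
  have hgm : ∀ i ≤ n, g i ≤ m := by
    intro i hi
    calc g i ≤ g n := hgmono hi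
    _ = m := hm
  -- rewrite the sum
  have hIcc : Finset.Icc 1 n = Finset.image (· + 1) (Finset.range n) := by
    ext x
    simp only [Finset.mem_Icc, Finset.mem_image, Finset.mem_range]
    constructor
    · intro h; exact ⟨x - 1, by omega, by omega⟩
    · rintro ⟨y, hy, rfl⟩; omega
  have hsum : (∑ i ∈ Finset.Icc 1 n, f (i - 1)) = ∑ i ∈ Finset.range n, f i := by
    rw [hIcc, Finset.sum_image (by intros a _ b _ h; simp only at h; omega)]
    simp
  have hsum2 : (∑ i ∈ Finset.range n, f i) = ∑ i ∈ Finset.range n, 2 ^ g i :=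
    Finset.sum_congr rfl fun i hi => hf i (le_of_lt (Finset.mem_range.1 hi))
  have hsplit : (∑ i ∈ Finset.range n, 2 ^ g i) =
      (∑ i ∈ Finset.range m, 2 ^ g i) + ∑ i ∈ Finset.Ico m n, 2 ^ g i := by
    rw [Finset.range_eq_Ico, ← Finset.sum_Ico_consecutive _ (Nat.zero_le m) hmn]
    rw [Finset.range_eq_Ico]
  constructor
  · rw [hsum, hsum2, hsplit]
    have h1 : (∑ i ∈ Finset.range m, 2 ^ g i) ≤ 2 ^ m - 1 := by
      calc (∑ i ∈ Finset.range m, 2 ^ g i) ≤ ∑ i ∈ Finset.range m, 2 ^ i :=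
            Finset.sum_le_sum fun i _ => Nat.pow_le_pow_right (by norm_num) (hgle i)
        _ = 2 ^ m - 1 := sum_two_pow_aux m
    have h2 : (∑ i ∈ Finset.Ico m n, 2 ^ g i) ≤ (n - m) * 2 ^ m := by
      calc (∑ i ∈ Finset.Ico m n, 2 ^ g i) ≤ ∑ _i ∈ Finset.Ico m n, 2 ^ m :=
            Finset.sum_le_sum fun i hi =>
              Nat.pow_le_pow_right (by norm_num)
                (hgm i (le_of_lt (Finset.mem_Ico.1 hi).2))
        _ = (n - m) * 2 ^ m := by rw [Finset.sum_const, Nat.card_Ico, smul_eq_mul]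
    omega
  · intro hA
    have hgmin : ∀ i ≤ n, g i = min i m := by
      intro i hi
      have : (Finset.range i).filter amb = Finset.range (min i m) := by
        ext j
        simp only [Finset.mem_filter, Finset.mem_range, lt_min_iff]
        constructor
        · rintro ⟨hj, ha⟩
          exact ⟨hj, (hA j (lt_of_lt_of_le hj hi)).1 ha⟩
        · rintro ⟨hj, hjm⟩
          exact ⟨hj, (hA j (lt_of_lt_of_le hj hi)).2 hjm⟩
      simp [hg, this]
    rw [hsum, hsum2, hsplit]
    have h1 : (∑ i ∈ Finset.range m, 2 ^ g i) = 2 ^ m - 1 := by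
      rw [← sum_two_pow_aux m]
      refine Finset.sum_congr rfl fun i hi => ?_
      have hi' := Finset.mem_range.1 hi
      rw [hgmin i (le_trans (le_of_lt hi') hmn), min_eq_left (le_of_lt hi')]
    have h2 : (∑ i ∈ Finset.Ico m n, 2 ^ g i) = (n - m) * 2 ^ m := by
      have hc : ∀ i ∈ Finset.Ico m n, 2 ^ g i = 2 ^ m := by
        intro i hi
        have hi' := Finset.mem_Ico.1 hi
        rw [hgmin i (le_of_lt hi'.2), min_eq_right hi'.1]
      rw [Finset.sum_congr rfl hc, Finset.sum_const, Nat.card_Ico, smul_eq_mul]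
    rw [h1, h2]
    omega
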